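/- arXiv:2501.05428 — 8 statements merged into one kernel-verified Lean document; each statement's English description precedes it below -/
import Mathlib

section
/- Let H be a finite-dimensional complex inner product space and let q : H → H be an orthogonal projection (q ∘ q = q and q* = q). Then every tangent vector A at q (i.e. every linear A with qA + Aq = A) decomposes uniquely as A = B + iC where B and C are self-adjoint linear maps each satisfying the tangency condition qB + Bq = B and qC + Cq = C. In particular, the tangent space to the manifold of orthogonal projections at q is a totally real subspace of the tangent space of the manifold of all projections with respect to the complex structure A ↦ iA. -/
/-- Let `H` be a finite-dimensional complex inner product space and
`q` an orthogonal projection (`q ∘ q = q`, `q* = q`).  Every tangent vector `A` at `q`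
(`q∘A + A∘q = A`) decomposes uniquely as `A = B + i•C` with `B`, `C` self-adjoint
tangent vectors at `q`.  (The tangent space of the zero section is totally real.) -/
theorem tangent_totally_real_decomposition
    (H : Type*) [NormedAddCommGroup H] [InnerProductSpace ℂ H] [FiniteDimensional ℂ H]
    (q A : H →ₗ[ℂ] H)
    (hq : q ∘ₗ q = q) (hqsa : LinearMap.adjoint q = q)
    (hA : q ∘ₗ A + A ∘ₗ q = A) :
    ∃! BC : (H →ₗ[ℂ] H) × (H →ₗ[ℂ] H),
      LinearMap.adjoint BC.1 = BC.1 ∧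
      LinearMap.adjoint BC.2 = BC.2 ∧
      q ∘ₗ BC.1 + BC.1 ∘ₗ q = BC.1 ∧
      q ∘ₗ BC.2 + BC.2 ∘ₗ q = BC.2 ∧
      A = BC.1 + Complex.I • BC.2 := by
  set A' := LinearMap.adjoint A with hA'def
  have hA' : q ∘ₗ A' + A' ∘ₗ q = A' := by
    have h := congrArg LinearMap.adjoint hA
    rw [map_add, LinearMap.adjoint_comp, LinearMap.adjoint_comp, hqsa, add_comm] at h
    exact h
  have hAA : LinearMap.adjoint A' = A := LinearMap.adjoint_adjoint A
  refine ⟨⟨(2⁻¹ : ℂ) • (A + A'), (-(Complex.I)/2) • (A - A')⟩, ⟨?_, ?_, ?_, ?_, ?_⟩, ?_⟩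
  · show LinearMap.adjoint ((2⁻¹ : ℂ) • (A + A')) = (2⁻¹ : ℂ) • (A + A')
    rw [map_smulₛₗ, map_add, hAA, ← hA'def]
    rw [show (starRingEnd ℂ) (2⁻¹:ℂ) = (2⁻¹:ℂ) by simp [Complex.ext_iff]]
    rw [add_comm]
  · show LinearMap.adjoint ((-(Complex.I)/2) • (A - A')) = (-(Complex.I)/2) • (A - A')
    rw [map_smulₛₗ, map_sub, hAA, ← hA'def]
    rw [show (starRingEnd ℂ) (-(Complex.I)/2) = Complex.I/2 by
      simp [div_eq_mul_inv, Complex.conj_ofNat]]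
    rw [show (Complex.I/2 : ℂ) = (-1 : ℂ) * (-(Complex.I)/2) by ring]
    rw [mul_smul, neg_one_smul, ← smul_neg, neg_sub]
  · show q ∘ₗ ((2⁻¹:ℂ) • (A + A')) + ((2⁻¹:ℂ) • (A + A')) ∘ₗ q = (2⁻¹:ℂ) • (A + A')
    rw [LinearMap.comp_smul, LinearMap.smul_comp, ← smul_add, LinearMap.comp_add,
      LinearMap.add_comp]
    congr 1
    calc q ∘ₗ A + q ∘ₗ A' + (A ∘ₗ q + A' ∘ₗ q)
        = (q ∘ₗ A + A ∘ₗ q) + (q ∘ₗ A' + A' ∘ₗ q) := by abel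
      _ = A + A' := by rw [hA, hA']
  · show q ∘ₗ ((-(Complex.I)/2) • (A - A')) + ((-(Complex.I)/2) • (A - A')) ∘ₗ q
        = (-(Complex.I)/2) • (A - A')
    rw [LinearMap.comp_smul, LinearMap.smul_comp, ← smul_add, LinearMap.comp_sub,
      LinearMap.sub_comp]
    congr 1
    calc q ∘ₗ A - q ∘ₗ A' + (A ∘ₗ q - A' ∘ₗ q)
        = (q ∘ₗ A + A ∘ₗ q) - (q ∘ₗ A' + A' ∘ₗ q) := by abel
      _ = A - A' := by rw [hA, hA']
  · show A = (2⁻¹:ℂ) • (A + A') + Complex.I • ((-(Complex.I)/2) • (A - A'))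
    rw [smul_smul]
    rw [show Complex.I * (-(Complex.I)/2) = (2⁻¹:ℂ) by simp [Complex.ext_iff]; norm_num]
    rw [← smul_add]
    rw [show A + A' + (A - A') = (2:ℂ) • A by rw [two_smul]; abel]
    rw [smul_smul]
    norm_num
  · rintro ⟨B, C⟩ ⟨hB, hC, _, _, hsum⟩
    simp only at hB hC hsum ⊢
    have hadj : A' = B - Complex.I • C := by
      rw [hA'def, hsum, map_add, hB, map_smulₛₗ, hC, Complex.conj_I, neg_smul,
        sub_eq_add_neg]
    have hBeq : B = (2⁻¹ : ℂ) • (A + A') := by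
      rw [hsum, hadj]
      rw [show B + Complex.I • C + (B - Complex.I • C) = (2:ℂ) • B by rw [two_smul]; abel]
      rw [smul_smul]; norm_num
    have hCeq : C = (-(Complex.I)/2) • (A - A') := by
      rw [hsum, hadj]
      rw [show B + Complex.I • C - (B - Complex.I • C) = (2:ℂ) • (Complex.I • C) by
        rw [two_smul]; abel]
      rw [smul_smul, smul_smul]
      rw [show -Complex.I / 2 * 2 * Complex.I = 1 by simp [Complex.ext_iff]]
      rw [one_smul]
    exact Prod.ext hBeq hCeq
end

section
/- Let H be a finite-dimensional complex inner product space, q : H → H a projection, and A, B tangent vectors at q (qA + Aq = A, qB + Bq = B). Set Ω_q(A,B) := i·Tr(q(AB − BA)). If [q,A] = A and [q,B] = B, then Ω_q(A,B) = 0; likewise, if [q,A] = −A and [q,B] = −B, then Ω_q(A,B) = 0. That is, both eigenspaces of the involution K_q = [q,·] on the tangent space at q are isotropic (Lagrangian) for Ω_q. -/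
/-- Both eigenspaces of the involution `K_q = [q,·]` on the tangent
space at a projection `q` are isotropic (Lagrangian) for
`Ω_q(A,B) = i·Tr(q(AB − BA))`. -/
theorem K_eigenspaces_isotropic
    (H : Type*) [NormedAddCommGroup H] [InnerProductSpace ℂ H] [FiniteDimensional ℂ H]
    (q A B : H →ₗ[ℂ] H)
    (hq : q ∘ₗ q = q)
    (hA : q ∘ₗ A + A ∘ₗ q = A)
    (hB : q ∘ₗ B + B ∘ₗ q = B) :
    ((q ∘ₗ A - A ∘ₗ q = A ∧ q ∘ₗ B - B ∘ₗ q = B) →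
      Complex.I * LinearMap.trace ℂ H (q ∘ₗ (A ∘ₗ B - B ∘ₗ A)) = 0) ∧
    ((q ∘ₗ A - A ∘ₗ q = -A ∧ q ∘ₗ B - B ∘ₗ q = -B) →
      Complex.I * LinearMap.trace ℂ H (q ∘ₗ (A ∘ₗ B - B ∘ₗ A)) = 0) := by
  constructor
  · rintro ⟨h1, h2⟩
    have hqA : q ∘ₗ A = A := by
      have h : (2:ℂ) • (q ∘ₗ A) = (2:ℂ) • A := by
        have h' : (q ∘ₗ A + A ∘ₗ q) + (q ∘ₗ A - A ∘ₗ q) = A + A := by rw [hA, h1]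
        rw [two_smul, two_smul, ← h']; abel
      exact smul_right_injective _ two_ne_zero h
    have hqB : q ∘ₗ B = B := by
      have h : (2:ℂ) • (q ∘ₗ B) = (2:ℂ) • B := by
        have h' : (q ∘ₗ B + B ∘ₗ q) + (q ∘ₗ B - B ∘ₗ q) = B + B := by rw [hB, h2]
        rw [two_smul, two_smul, ← h']; abel
      exact smul_right_injective _ two_ne_zero h
    have key : q ∘ₗ (A ∘ₗ B - B ∘ₗ A) = A ∘ₗ B - B ∘ₗ A := by
      rw [LinearMap.comp_sub, ← LinearMap.comp_assoc, ← LinearMap.comp_assoc, hqA, hqB]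
    rw [key, map_sub, LinearMap.trace_comp_comm' A B, sub_self, mul_zero]
  · rintro ⟨h1, h2⟩
    have hqA : q ∘ₗ A = 0 := by
      have h : (2:ℂ) • (q ∘ₗ A) = 0 := by
        have h' : (q ∘ₗ A + A ∘ₗ q) + (q ∘ₗ A - A ∘ₗ q) = A + -A := by rw [hA, h1]
        rw [add_neg_cancel] at h'
        rw [two_smul, ← h']; abel
      exact (smul_eq_zero_iff_right two_ne_zero).mp h
    have hqB : q ∘ₗ B = 0 := by
      have h : (2:ℂ) • (q ∘ₗ B) = 0 := by
        have h' : (q ∘ₗ B + B ∘ₗ q) + (q ∘ₗ B - B ∘ₗ q) = B + -B := by rw [hB, h2]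
        rw [add_neg_cancel] at h'
        rw [two_smul, ← h']; abel
      exact (smul_eq_zero_iff_right two_ne_zero).mp h
    have key : q ∘ₗ (A ∘ₗ B - B ∘ₗ A) = 0 := by
      rw [LinearMap.comp_sub, ← LinearMap.comp_assoc, ← LinearMap.comp_assoc, hqA, hqB]
      simp
    rw [key, map_zero, mul_zero]
end

section
/- Let H be a finite-dimensional complex inner product space, q : H → H an orthogonal projection (q ∘ q = q, q* = q), and A, B self-adjoint tangent vectors at q (qA + Aq = A, qB + Bq = B, A* = A, B* = B). Set Ω_q(A,B) := i·Tr(q(AB − BA)). Then: (i) Ω_q(A,B) = Tr(A · i[B,q]); (ii) Ω_q(A,B) is a real number; and (iii) the symmetric form (A,B) ↦ Tr(AB) is positive definite on self-adjoint tangent vectors, i.e. Tr(A∘A) > 0 whenever A ≠ 0. (Hence the zero section of T*G_n(H), i.e. the Grassmannian of orthogonal projections, is Kähler for the real part of Ω and Lagrangian for its imaginary part.) -/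
open scoped ComplexConjugate

local notation "⟪" x ", " y "⟫" => @inner ℂ _ _ x y

lemma trace_eq_sum_inner' {H : Type*} [NormedAddCommGroup H] [InnerProductSpace ℂ H]
    [FiniteDimensional ℂ H] (T : H →ₗ[ℂ] H) :
    LinearMap.trace ℂ H T = ∑ i, ⟪(stdOrthonormalBasis ℂ H) i, T ((stdOrthonormalBasis ℂ H) i)⟫ := by
  let b := stdOrthonormalBasis ℂ H
  rw [LinearMap.trace_eq_matrix_trace ℂ b.toBasis, Matrix.trace]
  congr 1
  ext i
  rw [Matrix.diag_apply, LinearMap.toMatrix_apply, OrthonormalBasis.coe_toBasis,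
    OrthonormalBasis.coe_toBasis_repr_apply, OrthonormalBasis.repr_apply_apply]

lemma trace_adjoint' {H : Type*} [NormedAddCommGroup H] [InnerProductSpace ℂ H]
    [FiniteDimensional ℂ H] (T : H →ₗ[ℂ] H) :
    LinearMap.trace ℂ H (LinearMap.adjoint T) = conj (LinearMap.trace ℂ H T) := by
  rw [trace_eq_sum_inner', trace_eq_sum_inner', map_sum]
  congr 1
  ext i
  rw [LinearMap.adjoint_inner_right, ← inner_conj_symm]

/-- For an orthogonal projection `q` and self-adjoint tangent vectors
`A, B` at `q`: (i) `Ω_q(A,B) = Tr(A ∘ i[B,q])`; (ii) `Ω_q(A,B)` is real;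
(iii) `Tr(A∘A) > 0` whenever `A ≠ 0` (the form `(A,B) ↦ Tr(AB)` is positive
definite on self-adjoint tangent vectors).  Hence the zero section is Kähler for
the real part of `Ω` and Lagrangian for its imaginary part. -/
theorem zero_section_kaehler
    (H : Type*) [NormedAddCommGroup H] [InnerProductSpace ℂ H] [FiniteDimensional ℂ H]
    (q A B : H →ₗ[ℂ] H)
    (hq : q ∘ₗ q = q) (hqsa : LinearMap.adjoint q = q)
    (hA : q ∘ₗ A + A ∘ₗ q = A) (hAsa : LinearMap.adjoint A = A)
    (hB : q ∘ₗ B + B ∘ₗ q = B) (hBsa : LinearMap.adjoint B = B) :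
    (Complex.I * LinearMap.trace ℂ H (q ∘ₗ (A ∘ₗ B - B ∘ₗ A)) =
      LinearMap.trace ℂ H (A ∘ₗ (Complex.I • (B ∘ₗ q - q ∘ₗ B)))) ∧
    (∃ r : ℝ, Complex.I * LinearMap.trace ℂ H (q ∘ₗ (A ∘ₗ B - B ∘ₗ A)) = (r : ℂ)) ∧
    (A ≠ 0 → ∃ r : ℝ, 0 < r ∧ LinearMap.trace ℂ H (A ∘ₗ A) = (r : ℂ)) := by
  have hmul : ∀ X Y : H →ₗ[ℂ] H, X ∘ₗ Y = X * Y := fun _ _ => rfl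
  refine ⟨?_, ?_, ?_⟩
  · -- (i)
    simp only [hmul, smul_sub, mul_sub, Algebra.mul_smul_comm, map_smul, map_sub, smul_eq_mul]
    have h1 : LinearMap.trace ℂ H (q*(A*B)) = LinearMap.trace ℂ H (A*(B*q)) := by
      rw [LinearMap.trace_mul_comm ℂ q (A*B), mul_assoc]
    have h2 : LinearMap.trace ℂ H (q*(B*A)) = LinearMap.trace ℂ H (A*(q*B)) := by
      rw [← mul_assoc, LinearMap.trace_mul_comm ℂ (q*B) A]
    rw [h1, h2]
  · -- (ii)
    set T := LinearMap.trace ℂ H (q ∘ₗ (A ∘ₗ B - B ∘ₗ A)) with hT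
    have hconj : conj T = -T := by
      rw [hT, ← trace_adjoint']
      have : LinearMap.adjoint (q ∘ₗ (A ∘ₗ B - B ∘ₗ A)) = (B ∘ₗ A - A ∘ₗ B) ∘ₗ q := by
        simp [LinearMap.adjoint_comp, map_sub, hqsa, hAsa, hBsa]
      rw [this]
      simp only [hmul, sub_mul, mul_sub, map_sub]
      rw [LinearMap.trace_mul_comm ℂ (B*A) q, LinearMap.trace_mul_comm ℂ (A*B) q]
      ring
    refine ⟨(Complex.I * T).re, ?_⟩
    have : conj (Complex.I * T) = Complex.I * T := by
      rw [map_mul, hconj]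
      simp [Complex.conj_I]
    exact (Complex.conj_eq_iff_re.mp this).symm
  · -- (iii)
    intro hA0
    let b := stdOrthonormalBasis ℂ H
    have key : ∀ x y : H, ⟪x, A y⟫ = ⟪A x, y⟫ := by
      intro x y
      nth_rewrite 1 [← hAsa]
      exact LinearMap.adjoint_inner_right A x y
    have htr : LinearMap.trace ℂ H (A ∘ₗ A) = ((∑ i, ‖A (b i)‖ ^ 2 : ℝ) : ℂ) := by
      rw [trace_eq_sum_inner']
      have hterm : ∀ i, ⟪b i, (A ∘ₗ A) (b i)⟫ = ((‖A (b i)‖ ^ 2 : ℝ) : ℂ) := by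
        intro i
        rw [LinearMap.comp_apply, key, inner_self_eq_norm_sq_to_K]
        norm_cast
      rw [Finset.sum_congr rfl fun i _ => hterm i]
      push_cast
      ring
    refine ⟨_, ?_, htr⟩
    have : ∃ i, A (b i) ≠ 0 := by
      by_contra h
      push_neg at h
      apply hA0
      apply b.toBasis.ext
      intro i
      simp [h i]
    obtain ⟨i, hi⟩ := this
    have hpos : (0:ℝ) < ‖A (b i)‖ ^ 2 := by
      have : (0:ℝ) < ‖A (b i)‖ := norm_pos_iff.mpr hi
      positivity
    calc (0:ℝ) < ‖A (b i)‖ ^ 2 := hpos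
      _ ≤ ∑ j, ‖A (b j)‖ ^ 2 :=
        Finset.single_le_sum (f := fun j => ‖A (b j)‖ ^ 2) (fun j _ => sq_nonneg _)
          (Finset.mem_univ i)
end

section
/- Let H be a finite-dimensional complex inner product space, q : H → H a projection, and M : H → H any linear map. Then i[M,q] is a tangent vector at q (i.e. q(i[M,q]) + (i[M,q])q = i[M,q]), and for every tangent vector B at q one has Ω_q(i[M,q], B) = Tr(M∘B), where Ω_q(A,B) := i·Tr(q(AB − BA)). In other words, i[M,q] is the Hamiltonian vector of the expectation-value function ⟨M⟩(q) = Tr(qM) with respect to Ω. -/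
/-- For a projection `q` and any linear map `M`, the operator
`i[M,q]` is a tangent vector at `q`, and for every tangent vector `B` at `q`,
`Ω_q(i[M,q], B) = Tr(M∘B)`; i.e. `i[M,q]` is the Hamiltonian vector of the
expectation value `⟨M⟩(q) = Tr(qM)`. -/
theorem hamiltonian_vector_of_expectation
    (H : Type*) [NormedAddCommGroup H] [InnerProductSpace ℂ H] [FiniteDimensional ℂ H]
    (q M : H →ₗ[ℂ] H)
    (hq : q ∘ₗ q = q) :
    (q ∘ₗ (Complex.I • (M ∘ₗ q - q ∘ₗ M)) + (Complex.I • (M ∘ₗ q - q ∘ₗ M)) ∘ₗ q =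
      Complex.I • (M ∘ₗ q - q ∘ₗ M)) ∧
    (∀ B : H →ₗ[ℂ] H, q ∘ₗ B + B ∘ₗ q = B →
      Complex.I * LinearMap.trace ℂ H
          (q ∘ₗ ((Complex.I • (M ∘ₗ q - q ∘ₗ M)) ∘ₗ B - B ∘ₗ (Complex.I • (M ∘ₗ q - q ∘ₗ M)))) =
        LinearMap.trace ℂ H (M ∘ₗ B)) := by
  simp only [← Module.End.mul_eq_comp] at hq ⊢
  have hq' : ∀ X : H →ₗ[ℂ] H, q * (q * X) = q * X := fun X => by rw [← mul_assoc, hq]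
  constructor
  · simp only [mul_smul_comm, smul_mul_assoc, ← smul_add]
    congr 1
    simp only [mul_sub, sub_mul, mul_assoc, hq', hq]
    abel
  · intro B hB
    have hBq : q * B * q = 0 := by
      have h := congrArg (· * q) hB
      simp only [add_mul, mul_assoc, hq] at h
      have h2 : q * (B * q) + B * q = B * q := h
      have h3 : q * (B * q) = 0 := by
        have := congrArg (· - B * q) h2
        simpa using this
      rw [← mul_assoc] at h3; exact h3
    set T := LinearMap.trace ℂ H with hT
    have tc : ∀ f g : H →ₗ[ℂ] H, T (f * g) = T (g * f) := fun f g =>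
      LinearMap.trace_mul_comm ℂ f g
    have expand : q * ((Complex.I • (M * q - q * M)) * B - B * (Complex.I • (M * q - q * M)))
        = Complex.I • (q * M * q * B - q * M * B - q * B * M * q + q * B * q * M) := by
      simp only [smul_mul_assoc, mul_smul_comm, ← smul_sub, ← smul_add]
      congr 1
      simp only [mul_sub, sub_mul, mul_assoc, hq', hq]
      abel
    rw [expand, map_smul, smul_eq_mul, ← mul_assoc, Complex.I_mul_I, hBq]
    have h1 : T (q * M * q * B) = 0 := by
      rw [tc (q * M * q) B, show B * (q * M * q) = B * q * M * q by noncomm_ring,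
        tc (B * q * M) q, show q * (B * q * M) = (q * B * q) * M by noncomm_ring,
        hBq, zero_mul, map_zero]
    have h2 : T (q * B * M * q) = T (q * B * M) := by
      rw [tc (q * B * M) q, show q * (q * B * M) = (q * q) * B * M by noncomm_ring, hq]
    have h3 : T (M * B) = T (M * q * B) + T (M * B * q) := by
      rw [← map_add, show M * q * B + M * B * q = M * (q * B + B * q) by noncomm_ring, hB]
    have h4 : T (M * q * B) = T (q * B * M) := by
      rw [show M * q * B = M * (q * B) from mul_assoc M q B, tc M (q * B)]
    have h5 : T (M * B * q) = T (q * M * B) := by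
      rw [tc (M * B) q, ← mul_assoc]
    simp only [zero_mul, map_sub, map_add, h1, map_zero]
    rw [h2, h3, h4, h5]
    ring
end

section
/- Let H be a finite-dimensional complex inner product space, q : H → H a projection, and A ≠ 0 a tangent vector at q (qA + Aq = A). Then i[A*,q] is a tangent vector at q and Ω_q(i[A*,q], A) = Tr(A*∘A) > 0, where Ω_q(X,Y) := i·Tr(q(XY − YX)). In particular, Ω_q is a nondegenerate bilinear form on the tangent space at q: for every nonzero tangent A there is a tangent B with Ω_q(B,A) ≠ 0. -/
/-- For a projection `q` and a nonzero tangent vector `A` at `q`,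
the operator `i[A*,q]` is a tangent vector at `q`, `Ω_q(i[A*,q], A) = Tr(A*∘A)`,
which is a positive real number; in particular `Ω_q` is nondegenerate on the
tangent space at `q`. -/
theorem Omega_nondegenerate
    (H : Type*) [NormedAddCommGroup H] [InnerProductSpace ℂ H] [FiniteDimensional ℂ H]
    (q A : H →ₗ[ℂ] H)
    (hq : q ∘ₗ q = q)
    (hA : q ∘ₗ A + A ∘ₗ q = A)
    (hA0 : A ≠ 0) :
    (q ∘ₗ (Complex.I • (LinearMap.adjoint A ∘ₗ q - q ∘ₗ LinearMap.adjoint A)) +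
        (Complex.I • (LinearMap.adjoint A ∘ₗ q - q ∘ₗ LinearMap.adjoint A)) ∘ₗ q =
      Complex.I • (LinearMap.adjoint A ∘ₗ q - q ∘ₗ LinearMap.adjoint A)) ∧
    (Complex.I * LinearMap.trace ℂ H
        (q ∘ₗ ((Complex.I • (LinearMap.adjoint A ∘ₗ q - q ∘ₗ LinearMap.adjoint A)) ∘ₗ A -
          A ∘ₗ (Complex.I • (LinearMap.adjoint A ∘ₗ q - q ∘ₗ LinearMap.adjoint A)))) =
      LinearMap.trace ℂ H (LinearMap.adjoint A ∘ₗ A)) ∧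
    (∃ r : ℝ, 0 < r ∧ LinearMap.trace ℂ H (LinearMap.adjoint A ∘ₗ A) = (r : ℂ)) ∧
    (∃ B : H →ₗ[ℂ] H, (q ∘ₗ B + B ∘ₗ q = B) ∧
      Complex.I * LinearMap.trace ℂ H (q ∘ₗ (B ∘ₗ A - A ∘ₗ B)) ≠ 0) := by
  set B : H →ₗ[ℂ] H := LinearMap.adjoint A with hB
  -- the three algebraic facts
  have hq' : (q : H →ₗ[ℂ] H) * q = q := hq
  have hA' : q * A + A * q = A := hA
  have hqA : q * A = A - A * q := by rw [eq_sub_iff_add_eq, hA']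
  have hqAq : q * A * q = 0 := by
    rw [hqA, sub_mul, mul_assoc, hq', sub_self]
  -- Part 1 : tangency
  have part1 : q ∘ₗ (Complex.I • (B ∘ₗ q - q ∘ₗ B)) +
      (Complex.I • (B ∘ₗ q - q ∘ₗ B)) ∘ₗ q = Complex.I • (B ∘ₗ q - q ∘ₗ B) := by
    simp only [← Module.End.mul_eq_comp]
    rw [mul_smul_comm, smul_mul_assoc, ← smul_add]
    congr 1
    rw [show q * (B * q - q * B) + (B * q - q * B) * q
        = B * (q * q) - (q * q) * B by noncomm_ring, hq']
  -- Part 2 : the symplectic pairing equals Tr(A* A)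
  have part2 : Complex.I * LinearMap.trace ℂ H
      (q ∘ₗ ((Complex.I • (B ∘ₗ q - q ∘ₗ B)) ∘ₗ A -
        A ∘ₗ (Complex.I • (B ∘ₗ q - q ∘ₗ B)))) = LinearMap.trace ℂ H (B ∘ₗ A) := by
    simp only [← Module.End.mul_eq_comp]
    have key : q * ((Complex.I • (B * q - q * B)) * A - A * (Complex.I • (B * q - q * B)))
        = Complex.I • ((q*B)*(q*A) - (q*q)*(B*A) - (q*(A*B))*q + (q*A*q)*B) := by
      noncomm_ring
      module
    have e1 : LinearMap.trace ℂ H ((q*B)*(q*A)) = 0 := by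
      rw [LinearMap.trace_mul_comm, show (q*A)*(q*B) = (q*A*q)*B by noncomm_ring,
        hqAq, zero_mul, map_zero]
    have e3 : LinearMap.trace ℂ H ((q*(A*B))*q) = LinearMap.trace ℂ H (q*(A*B)) := by
      rw [LinearMap.trace_mul_comm, ← mul_assoc, hq']
    have rhs : LinearMap.trace ℂ H (B*A)
        = LinearMap.trace ℂ H (q*(B*A)) + LinearMap.trace ℂ H (q*(A*B)) := by
      conv_lhs => rw [← hA']
      rw [mul_add, map_add, LinearMap.trace_mul_comm ℂ B (q*A), mul_assoc,
        show B*(A*q) = (B*A)*q by noncomm_ring, LinearMap.trace_mul_comm ℂ (B*A) q]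
      ring
    rw [key, hq', hqAq, zero_mul, map_smul, map_add, map_sub, map_sub, e1, e3, map_zero,
      smul_eq_mul, rhs, ← mul_assoc, Complex.I_mul_I]
    ring
  -- Part 3 : positivity of the trace
  have part3 : ∃ r : ℝ, 0 < r ∧ LinearMap.trace ℂ H (B ∘ₗ A) = (r : ℂ) := by
    let b := stdOrthonormalBasis ℂ H
    have htr : LinearMap.trace ℂ H (B ∘ₗ A)
        = ∑ i, inner ℂ (b i) ((B ∘ₗ A) (b i)) := by
      rw [LinearMap.trace_eq_matrix_trace ℂ b.toBasis, Matrix.trace]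
      congr 1; funext i
      simp [Matrix.diag, LinearMap.toMatrix_apply, OrthonormalBasis.coe_toBasis_repr_apply,
        OrthonormalBasis.repr_apply_apply]
    refine ⟨∑ i, ‖A (b i)‖ ^ 2, ?_, ?_⟩
    · have : ∃ i, A (b i) ≠ 0 := by
        by_contra h
        push_neg at h
        exact hA0 (b.toBasis.ext (by simpa using h))
      obtain ⟨i, hi⟩ := this
      exact Finset.sum_pos' (fun j _ => by positivity)
        ⟨i, Finset.mem_univ i, pow_pos (norm_pos_iff.mpr hi) 2⟩
    · rw [htr]
      push_cast
      congr 1; funext i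
      simp [hB, LinearMap.adjoint_inner_right, inner_self_eq_norm_sq_to_K]
  obtain ⟨r, hr, htr⟩ := part3
  refine ⟨part1, part2, ⟨r, hr, htr⟩, Complex.I • (B ∘ₗ q - q ∘ₗ B), part1, ?_⟩
  rw [part2, htr]
  exact_mod_cast hr.ne'
end

section
/- Let H be a finite-dimensional complex inner product space, q : H → H a projection, and M, N : H → H arbitrary linear maps. Then Tr(q·[[M,q],[N,q]]) = −Tr(q[M,N]); equivalently, Ω_q(i[M,q], i[N,q]) = i·Tr(q[M,N]), where Ω_q(A,B) := i·Tr(q(AB − BA)). (This is the statement that the expectation-value map M ↦ (q ↦ Tr(qM)) intertwines the commutator bracket on operators with the Poisson bracket of the symplectic form Ω on the space of projections.) -/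
/-- For a projection `q` and arbitrary linear maps `M, N`:
`Tr(q·[[M,q],[N,q]]) = −Tr(q[M,N])`, equivalently
`Ω_q(i[M,q], i[N,q]) = i·Tr(q[M,N])`.  (The expectation-value map intertwines the
commutator bracket with the Poisson bracket of `Ω`.) -/
theorem expectation_intertwines_brackets
    (H : Type*) [NormedAddCommGroup H] [InnerProductSpace ℂ H] [FiniteDimensional ℂ H]
    (q M N : H →ₗ[ℂ] H)
    (hq : q ∘ₗ q = q) :
    (LinearMap.trace ℂ H
        (q ∘ₗ ((M ∘ₗ q - q ∘ₗ M) ∘ₗ (N ∘ₗ q - q ∘ₗ N) -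
          (N ∘ₗ q - q ∘ₗ N) ∘ₗ (M ∘ₗ q - q ∘ₗ M))) =
      -LinearMap.trace ℂ H (q ∘ₗ (M ∘ₗ N - N ∘ₗ M))) ∧
    (Complex.I * LinearMap.trace ℂ H
        (q ∘ₗ ((Complex.I • (M ∘ₗ q - q ∘ₗ M)) ∘ₗ (Complex.I • (N ∘ₗ q - q ∘ₗ N)) -
          (Complex.I • (N ∘ₗ q - q ∘ₗ N)) ∘ₗ (Complex.I • (M ∘ₗ q - q ∘ₗ M)))) =
      Complex.I * LinearMap.trace ℂ H (q ∘ₗ (M ∘ₗ N - N ∘ₗ M))) := by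
  have hq' : q * q = q := hq
  have hq2 : ∀ x : H →ₗ[ℂ] H, q * (q * x) = q * x := by
    intro x; rw [← mul_assoc, hq']
  have first : LinearMap.trace ℂ H
      (q ∘ₗ ((M ∘ₗ q - q ∘ₗ M) ∘ₗ (N ∘ₗ q - q ∘ₗ N) -
        (N ∘ₗ q - q ∘ₗ N) ∘ₗ (M ∘ₗ q - q ∘ₗ M))) =
      -LinearMap.trace ℂ H (q ∘ₗ (M ∘ₗ N - N ∘ₗ M)) := by
    simp only [← Module.End.mul_eq_comp]
    simp only [mul_sub, sub_mul, mul_assoc, hq2, map_sub]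
    have c1 : LinearMap.trace ℂ H (q * (M * (q * (N * q)))) =
        LinearMap.trace ℂ H (q * (N * (q * (M * q)))) := by
      have e1 : q * (M * (q * (N * q))) = (q * M) * (q * (N * q)) := by noncomm_ring
      have e2 : (q * (N * q)) * (q * M) = q * (N * (q * (q * M))) := by noncomm_ring
      have e3 : q * (N * (q * (M * q))) = (q * (N * (q * M))) * q := by noncomm_ring
      have e4 : q * (q * (N * (q * M))) = (q * N) * (q * M) := by
        rw [hq2]; noncomm_ring
      rw [e1, LinearMap.trace_mul_comm ℂ (q * M) (q * (N * q)), e2, hq2,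
        e3, LinearMap.trace_mul_comm ℂ (q * (N * (q * M))) q,
        show q * (q * (N * (q * M))) = q * (N * (q * M)) from hq2 _]
    have c2 : LinearMap.trace ℂ H (q * (M * (N * q))) =
        LinearMap.trace ℂ H (q * (M * N)) := by
      rw [show q * (M * (N * q)) = (q * (M * N)) * q by noncomm_ring,
        LinearMap.trace_mul_comm, ← mul_assoc, hq']
    have c3 : LinearMap.trace ℂ H (q * (N * (M * q))) =
        LinearMap.trace ℂ H (q * (N * M)) := by
      rw [show q * (N * (M * q)) = (q * (N * M)) * q by noncomm_ring,
        LinearMap.trace_mul_comm, ← mul_assoc, hq']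
    rw [c1, c2, c3]
    ring
  refine ⟨first, ?_⟩
  have hsm : (Complex.I • (M ∘ₗ q - q ∘ₗ M)) ∘ₗ (Complex.I • (N ∘ₗ q - q ∘ₗ N)) -
      (Complex.I • (N ∘ₗ q - q ∘ₗ N)) ∘ₗ (Complex.I • (M ∘ₗ q - q ∘ₗ M)) =
      -(((M ∘ₗ q - q ∘ₗ M) ∘ₗ (N ∘ₗ q - q ∘ₗ N) -
        (N ∘ₗ q - q ∘ₗ N) ∘ₗ (M ∘ₗ q - q ∘ₗ M))) := by
    simp only [LinearMap.comp_smul, LinearMap.smul_comp, smul_smul, Complex.I_mul_I,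
      neg_smul, one_smul, neg_sub]
    abel
  rw [hsm]
  simp only [LinearMap.comp_neg, map_neg, first]
  ring
end

section
/- Let d ≥ 1, let q₀ be a d×d complex matrix which is a self-adjoint projection of rank n ≥ 1, and let μ be the Haar probability measure on the unitary group U(d). Then for all vectors Ψ₁, Ψ₂ ∈ ℂ^d one has (d/n) · ∫_{U(d)} ⟨(U q₀ U*)Ψ₁, (U q₀ U*)Ψ₂⟩ dμ(U) = ⟨Ψ₁, Ψ₂⟩. (This says the map Ψ ↦ (q ↦ qΨ), from the Hilbert space ℂ^d to sections of the tautological bundle over the Grassmannian, preserves inner products, i.e. is a unitary equivalence onto its image.) -/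
open Matrix MeasureTheory

/-- Matrices inherit the product measurable structure (entrywise). -/
noncomputable instance matrixMeasurableSpace {l m α : Type*} [MeasurableSpace α] :
    MeasurableSpace (Matrix l m α) :=
  inferInstanceAs (MeasurableSpace (l → m → α))

lemma aux_entry_bound {d : ℕ} (U : Matrix (Fin d) (Fin d) ℂ)
    (hU : U ∈ Matrix.unitaryGroup (Fin d) ℂ) (i j : Fin d) : ‖U i j‖ ≤ 1 := by
  have h := Matrix.mem_unitaryGroup_iff'.mp hU
  have h2 := congrArg (fun M => (M j j).re) h
  simp only [Matrix.mul_apply, Matrix.one_apply, if_pos rfl, Complex.one_re] at h2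
  rw [Complex.re_sum] at h2
  have h3 : ∀ k, ((star U) j k * U k j).re = ‖U k j‖^2 := by
    intro k
    rw [Matrix.star_apply, Complex.star_def, Complex.conj_mul']
    simp [← Complex.ofReal_pow]
  rw [Finset.sum_congr rfl (fun k _ => h3 k)] at h2
  simp only [if_pos trivial, Complex.one_re] at h2
  have h4 : ‖U i j‖^2 ≤ 1 := by
    rw [← h2]
    exact Finset.single_le_sum (f := fun k => ‖U k j‖^2) (fun k _ => by positivity)
      (Finset.mem_univ i)
  nlinarith [norm_nonneg (U i j)]

lemma aux_coe_meas {d : ℕ} (a b : Fin d) :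
    Measurable (fun U : Matrix.unitaryGroup (Fin d) ℂ =>
      (U : Matrix (Fin d) (Fin d) ℂ) a b) := by
  have h1 : Measurable (fun m : Matrix (Fin d) (Fin d) ℂ => m a b) :=
    (measurable_pi_apply (X := fun _ : Fin d => ℂ) b).comp
      (measurable_pi_apply (X := fun _ : Fin d => Fin d → ℂ) a)
  exact h1.comp measurable_subtype_coe

lemma aux_meas_entry {d : ℕ} (q₀ : Matrix (Fin d) (Fin d) ℂ) (i j : Fin d) :
    Measurable (fun U : Matrix.unitaryGroup (Fin d) ℂ =>
      ((U : Matrix (Fin d) (Fin d) ℂ) * q₀ * (U : Matrix (Fin d) (Fin d) ℂ)ᴴ) i j) := by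
  simp only [Matrix.mul_apply, Matrix.conjTranspose_apply]
  apply Finset.measurable_sum
  intro k _
  apply Measurable.mul
  · apply Finset.measurable_sum
    intro l _
    exact (aux_coe_meas i l).mul_const _
  · exact Complex.continuous_conj.measurable.comp (aux_coe_meas j k)

lemma aux_meas_mul {d : ℕ} (V : Matrix.unitaryGroup (Fin d) ℂ) :
    Measurable (fun U : Matrix.unitaryGroup (Fin d) ℂ => V * U) := by
  have hmat : Measurable (fun U : Matrix.unitaryGroup (Fin d) ℂ =>
      (V : Matrix (Fin d) (Fin d) ℂ) * (U : Matrix (Fin d) (Fin d) ℂ)) := by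
    apply measurable_pi_lambda
    intro a
    apply measurable_pi_lambda
    intro b
    simp only [Matrix.mul_apply]
    exact Finset.measurable_sum _ (fun k _ => ((aux_coe_meas k b).const_mul _))
  exact Measurable.subtype_mk hmat

lemma aux_trace_eq_rank {d n : ℕ} (q₀ : Matrix (Fin d) (Fin d) ℂ)
    (hidem : q₀ * q₀ = q₀) (hrank : q₀.rank = n) : q₀.trace = (n : ℂ) := by
  have hproj : LinearMap.IsProj (LinearMap.range q₀.mulVecLin) q₀.mulVecLin := by
    refine ⟨fun x => LinearMap.mem_range_self _ x, ?_⟩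
    rintro x ⟨y, rfl⟩
    show q₀.mulVecLin (q₀.mulVecLin y) = q₀.mulVecLin y
    simp only [Matrix.mulVecLin_apply, Matrix.mulVec_mulVec, hidem]
  have h1 := hproj.trace
  have h2 : LinearMap.trace ℂ (Fin d → ℂ) q₀.mulVecLin = q₀.trace := by
    rw [LinearMap.trace_eq_matrix_trace ℂ (Pi.basisFun ℂ (Fin d)),
      LinearMap.toMatrix_eq_toMatrix']
    congr 1
    exact LinearMap.toMatrix'_toLin' q₀
  rw [h2] at h1
  rw [h1, ← Matrix.rank, hrank]

lemma aux_perm_unitary {d : ℕ} (σ : Equiv.Perm (Fin d)) :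
    σ.permMatrix ℂ ∈ Matrix.unitaryGroup (Fin d) ℂ := by
  rw [Matrix.mem_unitaryGroup_iff]
  have hstar : star (σ.permMatrix ℂ) = (σ⁻¹).permMatrix ℂ := by
    ext a b
    simp only [Matrix.star_apply, Equiv.Perm.permMatrix, PEquiv.toMatrix_apply,
      Equiv.toPEquiv_apply, Option.mem_some_iff, apply_ite, star_one, star_zero]
    by_cases h : a = σ b
    · subst h; simp
    · have h2 : σ⁻¹ a ≠ b := fun hh => h (by rw [← hh]; simp)
      rw [if_neg h2, if_neg (fun hh : σ b = a => h hh.symm)]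
  rw [hstar]
  show (σ.toPEquiv.toMatrix : Matrix (Fin d) (Fin d) ℂ) * (σ⁻¹).toPEquiv.toMatrix = 1
  rw [← PEquiv.toMatrix_trans, ← Equiv.toPEquiv_trans]
  have : σ.trans σ⁻¹ = Equiv.refl (Fin d) := by
    ext x; simp
  rw [this, Equiv.toPEquiv_refl, PEquiv.toMatrix_refl]

lemma aux_diag_unitary {d : ℕ} (v : Fin d → ℂ) (hv : ∀ t, v t * star (v t) = 1) :
    Matrix.diagonal v ∈ Matrix.unitaryGroup (Fin d) ℂ := by
  rw [Matrix.mem_unitaryGroup_iff, Matrix.star_eq_conjTranspose,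
    Matrix.diagonal_conjTranspose, Matrix.diagonal_mul_diagonal]
  ext i j
  rcases eq_or_ne i j with rfl | h
  · simpa using hv i
  · simp [Matrix.diagonal_apply_ne _ h, Matrix.one_apply_ne h]

set_option maxHeartbeats 1600000 in
/-- Let `q₀` be a `d×d` complex self-adjoint projection of rank
`n ≥ 1` and let `μ` be the Haar probability measure on `U(d)`.  Then for all
`Ψ₁, Ψ₂ ∈ ℂ^d`, `(d/n) ∫ ⟨(U q₀ U*)Ψ₁, (U q₀ U*)Ψ₂⟩ dμ(U) = ⟨Ψ₁, Ψ₂⟩`, where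
`⟨x, y⟩ = ∑ conj (x i) * y i` is the standard Hermitian inner product.  (The map
`Ψ ↦ (q ↦ qΨ)` is a unitary equivalence onto its image.) -/
theorem coherent_state_map_unitary
    (d n : ℕ) (hd : 1 ≤ d) (hn : 1 ≤ n)
    (q₀ : Matrix (Fin d) (Fin d) ℂ)
    (hidem : q₀ * q₀ = q₀) (hsa : q₀ᴴ = q₀) (hrank : q₀.rank = n)
    (μ : Measure (Matrix.unitaryGroup (Fin d) ℂ))
    [IsProbabilityMeasure μ]
    (hinv : ∀ U₀ : Matrix.unitaryGroup (Fin d) ℂ,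
      Measure.map (fun U => U₀ * U) μ = μ) :
    ∀ Ψ₁ Ψ₂ : Fin d → ℂ,
      ((d : ℂ) / (n : ℂ)) *
        (∫ U : Matrix.unitaryGroup (Fin d) ℂ,
          star (((U : Matrix (Fin d) (Fin d) ℂ) * q₀ * (U : Matrix (Fin d) (Fin d) ℂ)ᴴ).mulVec Ψ₁) ⬝ᵥ
            (((U : Matrix (Fin d) (Fin d) ℂ) * q₀ * (U : Matrix (Fin d) (Fin d) ℂ)ᴴ).mulVec Ψ₂) ∂μ) =
      star Ψ₁ ⬝ᵥ Ψ₂ := by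
  classical
  intro Ψ₁ Ψ₂
  let G := Matrix.unitaryGroup (Fin d) ℂ
  set A : G → Matrix (Fin d) (Fin d) ℂ :=
    fun U => (U : Matrix (Fin d) (Fin d) ℂ) * q₀ * (U : Matrix (Fin d) (Fin d) ℂ)ᴴ with hA
  -- boundedness of entries
  set C : ℝ := ∑ k : Fin d, ∑ l : Fin d, ‖q₀ l k‖ with hC
  have hbd : ∀ (i j : Fin d) (U : G), ‖A U i j‖ ≤ C := by
    intro i j U
    have hU := U.2
    simp only [hA, Matrix.mul_apply, Matrix.conjTranspose_apply]
    refine (norm_sum_le _ _).trans ?_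
    apply Finset.sum_le_sum
    intro k _
    rw [norm_mul]
    have h1 : ‖∑ l, (U : Matrix (Fin d) (Fin d) ℂ) i l * q₀ l k‖ ≤ ∑ l, ‖q₀ l k‖ := by
      refine (norm_sum_le _ _).trans (Finset.sum_le_sum ?_)
      intro l _
      rw [norm_mul]
      exact mul_le_of_le_one_left (norm_nonneg _) (aux_entry_bound _ hU i l)
    have h2 : ‖star ((U : Matrix (Fin d) (Fin d) ℂ) j k)‖ ≤ 1 := by
      rw [norm_star]; exact aux_entry_bound _ hU j k
    calc ‖∑ l, (U : Matrix (Fin d) (Fin d) ℂ) i l * q₀ l k‖ *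
          ‖star ((U : Matrix (Fin d) (Fin d) ℂ) j k)‖
        ≤ (∑ l, ‖q₀ l k‖) * 1 := by
          apply mul_le_mul h1 h2 (norm_nonneg _)
          positivity
      _ = ∑ l, ‖q₀ l k‖ := mul_one _
  have hint : ∀ i j : Fin d, Integrable (fun U : G => A U i j) μ := by
    intro i j
    exact (integrable_const C).mono' (aux_meas_entry q₀ i j).aestronglyMeasurable
      (Filter.Eventually.of_forall (hbd i j))
  -- the averaged matrix
  set M : Matrix (Fin d) (Fin d) ℂ := Matrix.of (fun i j => ∫ U : G, A U i j ∂μ) with hM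
  -- shift invariance of integrals
  have hshift : ∀ (V : G) (i j : Fin d),
      ∫ U : G, A (V * U) i j ∂μ = ∫ U : G, A U i j ∂μ := by
    intro V i j
    conv_rhs => rw [← hinv V]
    rw [integral_map (aux_meas_mul V).aemeasurable]
    rw [hinv V]
    exact (aux_meas_entry q₀ i j).aestronglyMeasurable
  -- conjugation invariance of M
  have hconj : ∀ V : G, (V : Matrix (Fin d) (Fin d) ℂ) * M * (V : Matrix (Fin d) (Fin d) ℂ)ᴴ = M := by
    intro V
    ext i j
    have heq : ∀ U : G, A (V * U) = (V : Matrix (Fin d) (Fin d) ℂ) * A U * (V : Matrix (Fin d) (Fin d) ℂ)ᴴ := by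
      intro U
      simp only [hA, Submonoid.coe_mul, Matrix.conjTranspose_mul]
      noncomm_ring
    have hterm : ∀ (k l : Fin d), Integrable (fun U : G =>
        (V : Matrix (Fin d) (Fin d) ℂ) i l * A U l k *
          star ((V : Matrix (Fin d) (Fin d) ℂ) j k)) μ :=
      fun k l => ((hint l k).const_mul _).mul_const _
    have step1 : ((V : Matrix (Fin d) (Fin d) ℂ) * M * (V : Matrix (Fin d) (Fin d) ℂ)ᴴ) i j
        = ∑ k, ∑ l, ∫ U : G, (V : Matrix (Fin d) (Fin d) ℂ) i l * A U l k *
            star ((V : Matrix (Fin d) (Fin d) ℂ) j k) ∂μ := by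
      simp only [Matrix.mul_apply, Matrix.conjTranspose_apply, Finset.sum_mul]
      congr 1
      ext k
      congr 1
      ext l
      rw [eq_comm, integral_mul_const, integral_const_mul]
      rfl
    have step2 : (∑ k, ∑ l, ∫ U : G, (V : Matrix (Fin d) (Fin d) ℂ) i l * A U l k *
            star ((V : Matrix (Fin d) (Fin d) ℂ) j k) ∂μ)
        = ∫ U : G, ∑ k, ∑ l, (V : Matrix (Fin d) (Fin d) ℂ) i l * A U l k *
            star ((V : Matrix (Fin d) (Fin d) ℂ) j k) ∂μ := by
      rw [Finset.sum_congr rfl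
        (fun k _ => (integral_finset_sum _ (fun l _ => hterm k l)).symm)]
      exact (integral_finset_sum _
        (fun k _ => integrable_finset_sum _ (fun l _ => hterm k l))).symm
    have step3 : ∀ U : G, (∑ k, ∑ l, (V : Matrix (Fin d) (Fin d) ℂ) i l * A U l k *
            star ((V : Matrix (Fin d) (Fin d) ℂ) j k)) = A (V * U) i j := by
      intro U
      rw [heq U]
      simp only [Matrix.mul_apply, Matrix.conjTranspose_apply, Finset.sum_mul]
    rw [step1, step2]
    simp only [step3]
    rw [hshift V i j]
    rfl
  -- commutation
  have hcomm : ∀ V : G, (V : Matrix (Fin d) (Fin d) ℂ) * M = M * (V : Matrix (Fin d) (Fin d) ℂ) := by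
    intro V
    have hV : (V : Matrix (Fin d) (Fin d) ℂ)ᴴ * (V : Matrix (Fin d) (Fin d) ℂ) = 1 := by
      rw [← Matrix.star_eq_conjTranspose]
      exact Matrix.mem_unitaryGroup_iff'.mp V.2
    calc (V : Matrix (Fin d) (Fin d) ℂ) * M
        = (V : Matrix (Fin d) (Fin d) ℂ) * M * ((V : Matrix (Fin d) (Fin d) ℂ)ᴴ * (V : Matrix (Fin d) (Fin d) ℂ)) := by
          rw [hV, mul_one]
      _ = ((V : Matrix (Fin d) (Fin d) ℂ) * M * (V : Matrix (Fin d) (Fin d) ℂ)ᴴ) * (V : Matrix (Fin d) (Fin d) ℂ) := by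
          noncomm_ring
      _ = M * (V : Matrix (Fin d) (Fin d) ℂ) := by rw [hconj V]
  -- off-diagonal entries vanish
  have hoff : ∀ i j : Fin d, i ≠ j → M i j = 0 := by
    intro i j hij
    set v : Fin d → ℂ := fun t => if t = i then -1 else 1 with hv
    have hmem : Matrix.diagonal v ∈ Matrix.unitaryGroup (Fin d) ℂ := by
      apply aux_diag_unitary
      intro t
      by_cases h : t = i <;> simp [hv, h]
    have h1 := congrFun (congrFun (hcomm ⟨Matrix.diagonal v, hmem⟩) i) j
    simp only [Matrix.diagonal_mul, Matrix.mul_diagonal] at h1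
    rw [hv] at h1
    simp only [if_pos rfl, if_neg (fun h : j = i => hij h.symm), if_true, mul_one] at h1
    have h2 : (2 : ℂ) * M i j = 0 := by linear_combination -h1
    rcases mul_eq_zero.mp h2 with h | h
    · exact absurd h two_ne_zero
    · exact h
  -- diagonal entries are all equal
  have hdiag : ∀ i j : Fin d, M i i = M j j := by
    intro i j
    rcases eq_or_ne i j with rfl | hij
    · rfl
    set σ := Equiv.swap i j with hσ
    have h1 := congrFun (congrFun (hcomm ⟨σ.permMatrix ℂ, aux_perm_unitary σ⟩) i) j
    have hl : (σ.permMatrix ℂ * M) i j = M j j := by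
      rw [show (σ.permMatrix ℂ : Matrix (Fin d) (Fin d) ℂ) * M = M.submatrix σ id from
        PEquiv.toMatrix_toPEquiv_mul σ M]
      simp [hσ, Equiv.swap_apply_left]
    have hr : (M * σ.permMatrix ℂ) i j = M i i := by
      rw [show M * (σ.permMatrix ℂ : Matrix (Fin d) (Fin d) ℂ) = M.submatrix id σ.symm from
        PEquiv.mul_toMatrix_toPEquiv M σ]
      simp [hσ, Equiv.swap_apply_right]
    rw [hl, hr] at h1
    exact h1.symm
  -- M is scalar
  set i0 : Fin d := ⟨0, hd⟩ with hi0
  set c : ℂ := M i0 i0 with hc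
  have hMc : ∀ i j : Fin d, M i j = if i = j then c else 0 := by
    intro i j
    rcases eq_or_ne i j with rfl | hij
    · rw [if_pos rfl, hc]; exact hdiag i i0
    · rw [if_neg hij]; exact hoff i j hij
  -- trace computation
  have htrace : (d : ℂ) * c = (n : ℂ) := by
    have h1 : ∑ i : Fin d, M i i = (d : ℂ) * c := by
      rw [Finset.sum_congr rfl (fun i _ => by rw [hMc i i, if_pos rfl])]
      simp [mul_comm]
    have h2 : ∑ i : Fin d, M i i = ∫ U : G, ∑ i : Fin d, A U i i ∂μ := by
      rw [integral_finset_sum _ (fun i _ => hint i i)]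
      rfl
    have h3 : ∀ U : G, ∑ i : Fin d, A U i i = (n : ℂ) := by
      intro U
      have hU : (U : Matrix (Fin d) (Fin d) ℂ)ᴴ * (U : Matrix (Fin d) (Fin d) ℂ) = 1 := by
        rw [← Matrix.star_eq_conjTranspose]
        exact Matrix.mem_unitaryGroup_iff'.mp U.2
      have htr : (A U).trace = q₀.trace := by
        rw [hA]
        show ((U : Matrix (Fin d) (Fin d) ℂ) * q₀ * (U : Matrix (Fin d) (Fin d) ℂ)ᴴ).trace = _
        rw [Matrix.trace_mul_cycle, hU, Matrix.one_mul]
      calc ∑ i : Fin d, A U i i = (A U).trace := by simp [Matrix.trace, Matrix.diag]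
        _ = (n : ℂ) := by rw [htr, aux_trace_eq_rank q₀ hidem hrank]
    simp only [h3] at h2
    rw [integral_const] at h2
    simp only [measureReal_def, measure_univ, ENNReal.toReal_one, one_smul] at h2
    rw [← h1, h2]
  -- simplify the integrand
  have hsimp : ∀ U : G, star ((A U).mulVec Ψ₁) ⬝ᵥ ((A U).mulVec Ψ₂)
      = ∑ i, ∑ j, star (Ψ₁ i) * (A U i j * Ψ₂ j) := by
    intro U
    have hU : (U : Matrix (Fin d) (Fin d) ℂ)ᴴ * (U : Matrix (Fin d) (Fin d) ℂ) = 1 := by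
      rw [← Matrix.star_eq_conjTranspose]
      exact Matrix.mem_unitaryGroup_iff'.mp U.2
    have hAA : (A U)ᴴ * (A U) = A U := by
      rw [hA]
      show ((U : Matrix (Fin d) (Fin d) ℂ) * q₀ * (U : Matrix (Fin d) (Fin d) ℂ)ᴴ)ᴴ *
        ((U : Matrix (Fin d) (Fin d) ℂ) * q₀ * (U : Matrix (Fin d) (Fin d) ℂ)ᴴ) = _
      simp only [Matrix.conjTranspose_mul, Matrix.conjTranspose_conjTranspose, hsa]
      calc (U : Matrix (Fin d) (Fin d) ℂ) * (q₀ * (U : Matrix (Fin d) (Fin d) ℂ)ᴴ) *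
            ((U : Matrix (Fin d) (Fin d) ℂ) * q₀ * (U : Matrix (Fin d) (Fin d) ℂ)ᴴ)
          = (U : Matrix (Fin d) (Fin d) ℂ) * q₀ *
              ((U : Matrix (Fin d) (Fin d) ℂ)ᴴ * (U : Matrix (Fin d) (Fin d) ℂ)) *
              q₀ * (U : Matrix (Fin d) (Fin d) ℂ)ᴴ := by noncomm_ring
        _ = (U : Matrix (Fin d) (Fin d) ℂ) * (q₀ * q₀) * (U : Matrix (Fin d) (Fin d) ℂ)ᴴ := by
              rw [hU]; noncomm_ring
        _ = (U : Matrix (Fin d) (Fin d) ℂ) * q₀ * (U : Matrix (Fin d) (Fin d) ℂ)ᴴ := by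
              rw [hidem]
    rw [Matrix.star_mulVec, Matrix.dotProduct_mulVec, Matrix.vecMul_vecMul, hAA,
      ← Matrix.dotProduct_mulVec]
    simp [dotProduct, Matrix.mulVec, Finset.mul_sum]
  have hintegr : ∀ i j : Fin d, Integrable (fun U : G => star (Ψ₁ i) * (A U i j * Ψ₂ j)) μ :=
    fun i j => ((hint i j).mul_const _).const_mul _
  have hkey : (∫ U : G, star ((A U).mulVec Ψ₁) ⬝ᵥ ((A U).mulVec Ψ₂) ∂μ)
      = c * (star Ψ₁ ⬝ᵥ Ψ₂) := by
    simp only [hsimp]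
    rw [integral_finset_sum _ (fun i _ => integrable_finset_sum _ (fun j _ => hintegr i j))]
    have hi : ∀ i : Fin d, (∫ U : G, ∑ j, star (Ψ₁ i) * (A U i j * Ψ₂ j) ∂μ)
        = ∑ j, star (Ψ₁ i) * (M i j * Ψ₂ j) := by
      intro i
      rw [integral_finset_sum _ (fun j _ => hintegr i j)]
      refine Finset.sum_congr rfl fun j _ => ?_
      rw [integral_const_mul, integral_mul_const]
      rfl
    rw [Finset.sum_congr rfl (fun i _ => hi i)]
    have : ∀ i : Fin d, (∑ j, star (Ψ₁ i) * (M i j * Ψ₂ j)) = c * (star (Ψ₁ i) * Ψ₂ i) := by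
      intro i
      rw [Finset.sum_congr rfl (fun j _ => by rw [hMc i j])]
      simp [mul_ite, ite_mul, Finset.sum_ite_eq]
      ring
    rw [Finset.sum_congr rfl (fun i _ => this i), ← Finset.mul_sum]
    rfl
  rw [hkey]
  have hd0 : (d : ℂ) ≠ 0 := Nat.cast_ne_zero.mpr (by omega)
  have hn0 : (n : ℂ) ≠ 0 := Nat.cast_ne_zero.mpr (by omega)
  field_simp
  linear_combination (star Ψ₁ ⬝ᵥ Ψ₂) * htrace
end

section
/- Let q be a 2×2 complex matrix with q² = q and rank q = 1, and let A be a 2×2 complex matrix with qA + Aq = A. Then 2·Tr(q*q) − 1 is a real number ≥ 1, and the matrix J'(A) := (i/√(2·Tr(q*q) − 1)) · [q, A*] satisfies: (i) q·J'(A) + J'(A)·q = J'(A); (ii) J'(J'(A)) = −A; and (iii) J'(iA) = −i·J'(A). That is, J' is a complex structure on the tangent space of T*ℙ¹ (realized as rank-one projections on ℂ²) that anticommutes with the complex structure A ↦ iA. -/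
open Matrix

/-- Let `q` be a rank-one idempotent `2×2` complex matrix and
`A` a tangent vector at `q` (`qA + Aq = A`).  Then `2·Tr(q*q) − 1` is a real
number `≥ 1`, and `J'(X) := (i/√(2·Tr(q*q) − 1)) • [q, X*]` satisfies:
(i) `J'(A)` is again tangent at `q`; (ii) `J'(J'(A)) = −A`;
(iii) `J'(i•A) = −i•J'(A)`, i.e. `J'` is a complex structure on the tangent
space of `T*ℙ¹` anticommuting with `A ↦ i•A`. -/
theorem anticommuting_complex_structure_TP1
    (q A : Matrix (Fin 2) (Fin 2) ℂ)
    (hq : q * q = q) (hrank : q.rank = 1)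
    (hA : q * A + A * q = A) :
    ((2 * (qᴴ * q).trace - 1).im = 0 ∧ 1 ≤ (2 * (qᴴ * q).trace - 1).re) ∧
    (∀ J' : Matrix (Fin 2) (Fin 2) ℂ → Matrix (Fin 2) (Fin 2) ℂ,
      J' = (fun X =>
        (Complex.I / (Real.sqrt ((2 * (qᴴ * q).trace - 1).re) : ℂ)) • (q * Xᴴ - Xᴴ * q)) →
      (q * J' A + J' A * q = J' A) ∧
      (J' (J' A) = -A) ∧
      (J' (Complex.I • A) = -(Complex.I • J' A))) := by
  -- entry equations of q*q = q
  have h00 : q 0 0 * q 0 0 + q 0 1 * q 1 0 = q 0 0 := by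
    have := congrFun (congrFun hq 0) 0
    simpa [Matrix.mul_apply, Fin.sum_univ_two] using this
  have h01 : q 0 0 * q 0 1 + q 0 1 * q 1 1 = q 0 1 := by
    have := congrFun (congrFun hq 0) 1
    simpa [Matrix.mul_apply, Fin.sum_univ_two] using this
  have h10 : q 1 0 * q 0 0 + q 1 1 * q 1 0 = q 1 0 := by
    have := congrFun (congrFun hq 1) 0
    simpa [Matrix.mul_apply, Fin.sum_univ_two] using this
  have h11 : q 1 0 * q 0 1 + q 1 1 * q 1 1 = q 1 1 := by
    have := congrFun (congrFun hq 1) 1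
    simpa [Matrix.mul_apply, Fin.sum_univ_two] using this
  -- the trace of q is 1
  have htr : q 0 0 + q 1 1 = 1 := by
    by_contra h
    have hb : q 0 1 = 0 := by
      rcases mul_eq_zero.mp (show q 0 1 * (q 0 0 + q 1 1 - 1) = 0 by linear_combination h01) with h' | h'
      · exact h'
      · exact absurd (by linear_combination h') h
    have hc : q 1 0 = 0 := by
      rcases mul_eq_zero.mp (show q 1 0 * (q 0 0 + q 1 1 - 1) = 0 by linear_combination h10) with h' | h'
      · exact h'
      · exact absurd (by linear_combination h') h
    have ha : q 0 0 = 0 ∨ q 0 0 = 1 := by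
      rcases mul_eq_zero.mp (show q 0 0 * (q 0 0 - 1) = 0 by linear_combination h00 - q 1 0 * hb) with h' | h'
      · exact Or.inl h'
      · exact Or.inr (by linear_combination h')
    have hd : q 1 1 = 0 ∨ q 1 1 = 1 := by
      rcases mul_eq_zero.mp (show q 1 1 * (q 1 1 - 1) = 0 by linear_combination h11 - q 1 0 * hb) with h' | h'
      · exact Or.inl h'
      · exact Or.inr (by linear_combination h')
    rcases ha with ha | ha <;> rcases hd with hd | hd
    · have hq0 : q = 0 := by
        ext i j; fin_cases i <;> fin_cases j <;> simp_all
      rw [hq0, Matrix.rank_zero] at hrank; exact absurd hrank (by norm_num)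
    · exact h (by rw [ha, hd]; ring)
    · exact h (by rw [ha, hd]; ring)
    · have hq1 : q = 1 := by
        ext i j; fin_cases i <;> fin_cases j <;> simp_all [Matrix.one_apply]
      rw [hq1, Matrix.rank_one] at hrank
      simp at hrank
  have hd : q 1 1 = 1 - q 0 0 := by linear_combination htr
  -- the real part bound
  have ht : (qᴴ * q).trace =
      ((Complex.normSq (q 0 0) + Complex.normSq (q 0 1) + Complex.normSq (q 1 0)
        + Complex.normSq (q 1 1) : ℝ) : ℂ) := by
    simp [Matrix.trace, Matrix.mul_apply, Fin.sum_univ_two, Matrix.conjTranspose_apply,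
      ← Complex.normSq_eq_conj_mul_self]
    ring
  have part1 : (2 * (qᴴ * q).trace - 1).im = 0 ∧ 1 ≤ (2 * (qᴴ * q).trace - 1).re := by
    rw [ht]
    have k1 : ‖q 0 1‖ * ‖q 1 0‖
        = ‖q 0 0‖ * ‖1 - q 0 0‖ := by
      rw [← norm_mul, ← norm_mul]; congr 1; linear_combination h00
    have habs : 1 ≤ ‖q 0 0‖ + ‖1 - q 0 0‖ := by
      have := norm_add_le (q 0 0) (1 - q 0 0)
      simpa using this
    have e1 : Complex.normSq (q 0 0) = ‖q 0 0‖ ^ 2 := (Complex.sq_norm _).symm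
    have e2 : Complex.normSq (q 0 1) = ‖q 0 1‖ ^ 2 := (Complex.sq_norm _).symm
    have e3 : Complex.normSq (q 1 0) = ‖q 1 0‖ ^ 2 := (Complex.sq_norm _).symm
    have e4 : Complex.normSq (q 1 1) = ‖1 - q 0 0‖ ^ 2 := by
      rw [hd]; exact (Complex.sq_norm _).symm
    have key : 1 ≤ Complex.normSq (q 0 0) + Complex.normSq (q 0 1) + Complex.normSq (q 1 0)
        + Complex.normSq (q 1 1) := by
      rw [e1, e2, e3, e4]
      nlinarith [sq_nonneg (‖q 0 1‖ - ‖q 1 0‖), k1, habs,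
        norm_nonneg (q 0 0), norm_nonneg (1 - q 0 0)]
    constructor
    · simp
    · simp only [Complex.sub_re, Complex.mul_re, Complex.ofReal_re, Complex.ofReal_im,
        Complex.one_re]
      norm_num
      linarith
  refine ⟨part1, ?_⟩
  -- the key commutator identity
  have key : q * (A * qᴴ - qᴴ * A) - (A * qᴴ - qᴴ * A) * q
      = (-(2 * (qᴴ * q).trace - 1)) • A := by
    have K : q * qᴴ + qᴴ * q = q + qᴴ + ((qᴴ * q).trace - 1) • (1 : Matrix (Fin 2) (Fin 2) ℂ) := by
      ext i j
      fin_cases i <;> fin_cases j <;>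
        simp [Matrix.mul_apply, Fin.sum_univ_two, Matrix.conjTranspose_apply, Matrix.trace,
          Matrix.one_apply] <;>
        simp only [hd, map_sub, _root_.map_one] <;> ring
    have e1 : q * (A * qᴴ - qᴴ * A) - (A * qᴴ - qᴴ * A) * q
        = (q * A + A * q) * qᴴ + qᴴ * (q * A + A * q)
          - ((q * qᴴ + qᴴ * q) * A + A * (q * qᴴ + qᴴ * q)) := by
      noncomm_ring
    rw [hA, K] at e1
    rw [e1]
    have expand : (q + qᴴ + ((qᴴ * q).trace - 1) • 1) * A + A * (q + qᴴ + ((qᴴ * q).trace - 1) • 1)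
        = (q * A + A * q) + qᴴ * A + A * qᴴ + (2 * ((qᴴ * q).trace - 1)) • A := by
      simp only [add_mul, mul_add, smul_mul_assoc, mul_smul_comm, one_mul, mul_one,
        Matrix.one_mul, Matrix.mul_one]
      module
    rw [expand, hA]
    module
  intro J' hJ'
  subst hJ'
  set y : ℝ := (2 * (qᴴ * q).trace - 1).re with hy
  set c : ℂ := Complex.I / (Real.sqrt y : ℂ) with hc
  refine ⟨?_, ?_, ?_⟩
  · -- (i) tangency
    show q * (c • (q * Aᴴ - Aᴴ * q)) + (c • (q * Aᴴ - Aᴴ * q)) * q = c • (q * Aᴴ - Aᴴ * q)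
    simp only [Matrix.mul_smul, Matrix.smul_mul, ← smul_add]
    congr 1
    rw [mul_sub, sub_mul, ← mul_assoc q q Aᴴ, hq, mul_assoc Aᴴ q q, hq, ← mul_assoc q Aᴴ q]
    abel
  · -- (ii) square is -1
    show c • (q * (c • (q * Aᴴ - Aᴴ * q))ᴴ - (c • (q * Aᴴ - Aᴴ * q))ᴴ * q) = -A
    have hBH : (q * Aᴴ - Aᴴ * q)ᴴ = A * qᴴ - qᴴ * A := by
      simp [Matrix.conjTranspose_sub, Matrix.conjTranspose_mul]
    rw [Matrix.conjTranspose_smul, hBH]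
    rw [Matrix.mul_smul, Matrix.smul_mul, ← smul_sub, smul_smul, key, smul_smul]
    have hre0 : (0:ℝ) < y := by rw [hy]; linarith [part1.2]
    have hs : (2 * (qᴴ * q).trace - 1) = ((y : ℝ) : ℂ) := by
      apply Complex.ext
      · simp [hy]
      · simp [part1.1]
    have h1 : c * star c = ((y : ℝ) : ℂ)⁻¹ := by
      rw [hc, star_div₀]
      simp only [Complex.star_def, Complex.conj_I, Complex.conj_ofReal]
      rw [div_mul_div_comm, ← Complex.ofReal_mul, Real.mul_self_sqrt hre0.le]
      rw [mul_neg, Complex.I_mul_I, neg_neg, one_div]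
    have hscalar : c * star c * (-(2 * (qᴴ * q).trace - 1)) = -1 := by
      rw [h1, hs, mul_neg, ← Complex.ofReal_inv, ← Complex.ofReal_mul]
      rw [inv_mul_cancel₀ hre0.ne']
      simp
    rw [hscalar, neg_one_smul]
  · -- (iii) anticommutation with i
    show c • (q * (Complex.I • A)ᴴ - (Complex.I • A)ᴴ * q)
        = -(Complex.I • (c • (q * Aᴴ - Aᴴ * q)))
    have hsm : (Complex.I • A)ᴴ = (-Complex.I) • Aᴴ := by
      simp [Matrix.conjTranspose_smul, Complex.conj_I]
    rw [hsm, Matrix.mul_smul, Matrix.smul_mul, ← smul_sub, smul_smul, smul_smul, ← neg_smul]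
    congr 1
    ring
end
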